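/- Let x ∈ 𝒱, λ = λ(x), and define F₂₁ = ∫₀^∞ 1_{x_d < a ≤ x_b} e^{−λa − max(a−x_d,0)} da and F₂₂ = ∫₀^{x_b} e^{−(1+λ)a} da. Then F₂₂ < 1, and the functions N¹(a) = e^{−(λa + max(a−x_d,0))} and N²(a) = (F₂₁/(1−F₂₂)) e^{−(1+λ)a} satisfy: (a) for every a > 0 with a ≠ x_d, (N¹)′(a) = −(1_{a>x_d} + λ) N¹(a), and for every a > 0, (N²)′(a) = −(1+λ) N²(a); (b) the boundary conditions N¹(0) = ∫₀^{min(x_b,x_d)} N¹(a) da and N²(0) = ∫₀^∞ 1_{x_d < a ≤ x_b} N¹(a) da + ∫₀^{x_b} N²(a) da. Hence N = (N¹, N²) is an eigenvector of the age-structured transport operator associated with the eigenvalue λ(x). -/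

import Mathlib

open MeasureTheory Set Filter

noncomputable section

/-- The viable set `𝒱 = {(x_b, x_d) : min(x_b, x_d) > 1}`. -/
def viable : Set (ℝ × ℝ) := {x : ℝ × ℝ | 1 < min x.1 x.2}

/-- `lam` is a Malthusian parameter function on `𝒱`. -/
def IsMalthusian (lam : ℝ × ℝ → ℝ) : Prop :=
  ∀ x ∈ viable, 0 < lam x ∧ (∫ a in (0:ℝ)..(min x.1 x.2), Real.exp (-(lam x) * a)) = 1

/-- First component of the stable age distribution: `N¹(a) = e^{−(λa + max(a−x_d,0))}`. -/
def N1 (lam : ℝ × ℝ → ℝ) (x : ℝ × ℝ) (a : ℝ) : ℝ :=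
  Real.exp (-(lam x * a + max (a - x.2) 0))

/-- `F₂₁ = ∫₀^∞ 1_{x_d < a ≤ x_b} e^{−λa − max(a−x_d,0)} da`. -/
def F21 (lam : ℝ × ℝ → ℝ) (x : ℝ × ℝ) : ℝ :=
  ∫ a in Ioi (0:ℝ),
    if x.2 < a ∧ a ≤ x.1 then Real.exp (-(lam x) * a - max (a - x.2) 0) else 0

/-- `F₂₂ = ∫₀^{x_b} e^{−(1+λ)a} da`. -/
def F22 (lam : ℝ × ℝ → ℝ) (x : ℝ × ℝ) : ℝ :=
  ∫ a in (0:ℝ)..x.1, Real.exp (-(1 + lam x) * a)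

/-- Second component of the stable age distribution:
`N²(a) = (F₂₁/(1−F₂₂)) e^{−(1+λ)a}`. -/
def N2 (lam : ℝ × ℝ → ℝ) (x : ℝ × ℝ) (a : ℝ) : ℝ :=
  (F21 lam x / (1 - F22 lam x)) * Real.exp (-(1 + lam x) * a)

/-- `(N¹, N²)` is an eigenvector of the age-structured transport operator for the
eigenvalue `λ(x)`: `F₂₂ < 1`, the ODEs `(N¹)′ = −(1_{a>x_d} + λ)N¹` (away from `x_d`) and
`(N²)′ = −(1+λ)N²` hold, together with the birth boundary conditions. -/
lemma int_exp_neg (c b : ℝ) (hc : c ≠ 0) :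
    ∫ a in (0:ℝ)..b, Real.exp (-c * a) = (1 - Real.exp (-c * b)) / c := by
  have h : ∀ a ∈ uIcc (0:ℝ) b,
      HasDerivAt (fun a => -(Real.exp (-c * a)) / c) (Real.exp (-c * a)) a := by
    intro a _
    have h1 : HasDerivAt (fun a : ℝ => -c * a) (-c) a := by
      simpa using (hasDerivAt_id a).const_mul (-c)
    have := ((h1.exp).neg).div_const c
    refine this.congr_deriv ?_
    field_simp
  rw [intervalIntegral.integral_eq_sub_of_hasDerivAt h
    ((Real.continuous_exp.comp (continuous_const.mul continuous_id)).intervalIntegrable 0 b)]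
  simp
  ring

theorem stable_age_distribution_eigenvector (lam : ℝ × ℝ → ℝ) (hlam : IsMalthusian lam)
    (x : ℝ × ℝ) (hx : x ∈ viable) :
    F22 lam x < 1 ∧
    (∀ a : ℝ, 0 < a → a ≠ x.2 →
      HasDerivAt (N1 lam x) (-((if x.2 < a then (1:ℝ) else 0) + lam x) * N1 lam x a) a) ∧
    (∀ a : ℝ, 0 < a →
      HasDerivAt (N2 lam x) (-(1 + lam x) * N2 lam x a) a) ∧
    N1 lam x 0 = (∫ a in (0:ℝ)..(min x.1 x.2), N1 lam x a) ∧
    N2 lam x 0 =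
      (∫ a in Ioi (0:ℝ), if x.2 < a ∧ a ≤ x.1 then N1 lam x a else 0) +
        ∫ a in (0:ℝ)..x.1, N2 lam x a := by
  obtain ⟨hl, hint⟩ := hlam x hx
  have hx1 : (1:ℝ) < x.1 := lt_of_lt_of_le hx (min_le_left _ _)
  have hx2 : (1:ℝ) < x.2 := lt_of_lt_of_le hx (min_le_right _ _)
  have hc : (0:ℝ) < 1 + lam x := by linarith
  have hF22 : F22 lam x < 1 := by
    rw [F22, int_exp_neg _ _ (ne_of_gt hc)]
    rw [div_lt_one hc]
    have := Real.exp_pos (-(1 + lam x) * x.1)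
    linarith
  refine ⟨hF22, ?_, ?_, ?_, ?_⟩
  · -- derivative of N1
    intro a ha hne
    rcases lt_or_gt_of_ne hne with h | h
    · -- a < x.2
      have heq : N1 lam x =ᶠ[nhds a] fun b => Real.exp (-(lam x * b)) := by
        filter_upwards [eventually_lt_nhds h] with b hb
        simp [N1, max_eq_right (by linarith : b - x.2 ≤ 0)]
      have h1 : HasDerivAt (fun b : ℝ => -(lam x * b)) (-(lam x)) a := by
        simpa [Pi.neg_def] using ((hasDerivAt_id a).const_mul (lam x)).neg
      have := h1.exp
      have := this.congr_of_eventuallyEq heq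
      refine this.congr_deriv ?_
      simp [N1, max_eq_right (by linarith : a - x.2 ≤ 0), not_lt.2 h.le]
      ring
    · -- a > x.2
      have heq : N1 lam x =ᶠ[nhds a] fun b => Real.exp (-(lam x * b + (b - x.2))) := by
        filter_upwards [eventually_gt_nhds h] with b hb
        simp [N1, max_eq_left (by linarith : (0:ℝ) ≤ b - x.2)]
      have h1 : HasDerivAt (fun b : ℝ => -(lam x * b + (b - x.2))) (-(lam x + 1)) a := by
        have := (((hasDerivAt_id a).const_mul (lam x)).add
          ((hasDerivAt_id a).sub_const x.2)).neg
        simpa [Pi.neg_def, Pi.add_def] using this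
      have := (h1.exp).congr_of_eventuallyEq heq
      refine this.congr_deriv ?_
      simp [N1, max_eq_left (by linarith : (0:ℝ) ≤ a - x.2), if_pos h]
      ring
  · -- derivative of N2
    intro a _
    have h1 : HasDerivAt (fun b : ℝ => -(1 + lam x) * b) (-(1 + lam x)) a := by
      simpa using (hasDerivAt_id a).const_mul (-(1 + lam x))
    have := (h1.exp).const_mul (F21 lam x / (1 - F22 lam x))
    refine this.congr_deriv ?_
    simp [N2]
    ring
  · -- first boundary condition
    have h0 : N1 lam x 0 = 1 := by
      simp [N1]
      linarith
    rw [h0, ← hint]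
    apply intervalIntegral.integral_congr
    intro a ha
    rw [uIcc_of_le (le_min (by linarith) (by linarith) : (0:ℝ) ≤ min x.1 x.2)] at ha
    have ha2 : a ≤ x.2 := le_trans ha.2 (min_le_right _ _)
    simp [N1, max_eq_right (by linarith : a - x.2 ≤ 0)]
  · -- second boundary condition
    have hI1 : (∫ a in Ioi (0:ℝ), if x.2 < a ∧ a ≤ x.1 then N1 lam x a else 0)
        = F21 lam x := by
      rw [F21]
      congr 1
      funext a
      split_ifs with h
      · simp only [N1]
        congr 1
        ring
      · rfl
    have hI2 : (∫ a in (0:ℝ)..x.1, N2 lam x a)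
        = (F21 lam x / (1 - F22 lam x)) * F22 lam x := by
      simp only [N2]
      rw [intervalIntegral.integral_const_mul]
      rfl
    rw [hI1, hI2]
    have hne : 1 - F22 lam x ≠ 0 := by linarith
    simp only [N2]
    rw [mul_zero, Real.exp_zero, mul_one]
    field_simp
    ring
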